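/- arXiv:2304.02128 — 7 statements merged into one kernel-verified Lean document; each statement's English description precedes it below -/
import Mathlib

section
/- Let m ≥ 2 and λ₁, …, λ_r be positive integers with 1 ≤ λ_i < m, let λ₀ = Σ λ_i, and assume gcd(m, λ₀) = 1. Then the cardinality of the set G = { mj − iλ₀ : 1 ≤ i ≤ m−1, ⌈iλ₀/m⌉ ≤ j ≤ (Σ_{ℓ=1}^r ⌈iλ_ℓ/m⌉) − 1 } equals (m(r−1) + 1 − Σ_{ℓ=1}^r gcd(m, λ_ℓ))/2. -/
-- counting lemma
lemma count_dvd (m l : ℕ) (hm : 2 ≤ m) :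
    ((Finset.Ico 1 m).filter (fun i => m ∣ i * l)).card = Nat.gcd m l - 1 := by
  set g := Nat.gcd m l with hg
  have hm0 : 0 < m := by omega
  have hg0 : 0 < g := Nat.gcd_pos_of_pos_left l hm0
  have hdm : g ∣ m := Nat.gcd_dvd_left m l
  have hdl : g ∣ l := Nat.gcd_dvd_right m l
  set d := m / g with hd
  have hmd : m = d * g := by rw [hd, Nat.div_mul_cancel hdm]
  have hd0 : 0 < d := Nat.div_pos (Nat.le_of_dvd hm0 hdm) hg0
  have hcop : Nat.Coprime d (l / g) := Nat.coprime_div_gcd_div_gcd hg0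
  have key : ∀ i : ℕ, (m ∣ i * l) ↔ (d ∣ i) := by
    intro i
    constructor
    · intro h
      obtain ⟨k, hk⟩ := h
      -- i * l = m * k, l = g * (l/g), m = d * g
      have hl : l = g * (l / g) := (Nat.mul_div_cancel' hdl).symm
      have : i * (l / g) * g = d * k * g := by
        rw [mul_assoc, mul_comm (l/g) g, ← hl]
        rw [hk, hmd]; ring
      have h2 : i * (l / g) = d * k := Nat.eq_of_mul_eq_mul_right hg0 this
      have : d ∣ i * (l / g) := ⟨k, h2⟩
      exact (Nat.Coprime.dvd_of_dvd_mul_right hcop this)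
    · rintro ⟨t, rfl⟩
      have hl : l = g * (l / g) := (Nat.mul_div_cancel' hdl).symm
      refine ⟨t * (l / g), ?_⟩
      rw [hmd]; nth_rewrite 1 [hl]; ring
  have : (Finset.Ico 1 m).filter (fun i => m ∣ i * l) =
      (Finset.Ioc 0 (m - 1)).filter (fun i => d ∣ i) := by
    ext i
    simp only [Finset.mem_filter, Finset.mem_Ico, Finset.mem_Ioc]
    constructor
    · rintro ⟨⟨h1, h2⟩, h3⟩; exact ⟨⟨by omega, by omega⟩, (key i).mp h3⟩
    · rintro ⟨⟨h1, h2⟩, h3⟩; exact ⟨⟨by omega, by omega⟩, (key i).mpr h3⟩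
  rw [this, Nat.Ioc_filter_dvd_card_eq_div]
  -- (m-1)/d = g - 1
  rw [hmd]
  by_cases h1 : d = 1
  · simp [h1]
  · have : d * g - 1 = d * (g - 1) + (d - 1) := by
      have h2 : d * g = d * (g - 1) + d := by
        conv_lhs => rw [← Nat.succ_pred_eq_of_pos hg0, Nat.mul_succ, Nat.pred_eq_sub_one]
      omega
    rw [this, Nat.mul_add_div hd0, Nat.div_eq_of_lt (by omega)]
    omega

lemma pair_ceil (m l i : ℕ) (hm : 2 ≤ m) (hi1 : 1 ≤ i) (hi2 : i < m) :
    ⌈(i * l : ℚ) / m⌉ + ⌈((m - i : ℕ) * l : ℚ) / m⌉ =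
      (l : ℤ) + 1 - (if m ∣ i * l then 1 else 0) := by
  have hm0 : (m : ℚ) ≠ 0 := by positivity
  set q : ℚ := (i * l : ℚ) / m with hq
  have hrefl : ((m - i : ℕ) * l : ℚ) / m = (l : ℚ) - q := by
    rw [hq]
    rw [Nat.cast_sub (le_of_lt hi2)]
    field_simp
  rw [hrefl]
  have h2 : ⌈(l : ℚ) - q⌉ = (l : ℤ) - ⌊q⌋ := by
    rw [show ((l:ℚ)) = ((l:ℤ):ℚ) by push_cast; ring]
    rw [sub_eq_add_neg, add_comm, Int.ceil_add_intCast, Int.ceil_neg]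
    push_cast
    ring
  rw [h2]
  by_cases hdvd : m ∣ i * l
  · obtain ⟨k, hk⟩ := id hdvd
    have hqk : q = (k : ℚ) := by
      rw [hq]
      rw [show ((i:ℚ) * l) = ((i * l : ℕ) : ℚ) by push_cast; ring, hk]
      push_cast
      field_simp
    rw [if_pos hdvd, hqk]
    simp
  · have hfd : (⌊q⌋ : ℚ) < q := by
      rcases lt_or_eq_of_le (Int.floor_le q) with h | h
      · exact h
      · exfalso
        apply hdvd
        have : ((i * l : ℕ) : ℚ) = (⌊q⌋ : ℚ) * m := by
          push_cast
          rw [h, hq]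
          field_simp
        have h3 : ((i * l : ℕ) : ℤ) = ⌊q⌋ * m := by exact_mod_cast this
        have : (m : ℤ) ∣ ((i * l : ℕ) : ℤ) := ⟨⌊q⌋, by rw [h3]; ring⟩
        exact_mod_cast this
    have hceil : ⌈q⌉ = ⌊q⌋ + 1 := by
      have h1 : ⌈q⌉ ≤ ⌊q⌋ + 1 := Int.ceil_le_floor_add_one q
      have h2 : ⌊q⌋ < ⌈q⌉ := by
        have := Int.le_ceil q
        exact_mod_cast lt_of_lt_of_le hfd this
      omega
    rw [hceil]
    simp [hdvd]
    ring

lemma sum_ceil (m l : ℕ) (hm : 2 ≤ m) :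
    2 * ∑ i ∈ Finset.Ico 1 m, ⌈(i * l : ℚ) / m⌉ =
      ((m : ℤ) - 1) * (l + 1) - Nat.gcd m l + 1 := by
  have hg0 : 0 < Nat.gcd m l := Nat.gcd_pos_of_pos_left l (by omega)
  have hrefl : ∑ i ∈ Finset.Ico 1 m, ⌈(((m - i : ℕ)) * l : ℚ) / m⌉ =
      ∑ i ∈ Finset.Ico 1 m, ⌈(i * l : ℚ) / m⌉ := by
    apply Finset.sum_nbij' (fun i => m - i) (fun i => m - i)
    · intro a ha; simp only [Finset.mem_Ico] at *; omega
    · intro a ha; simp only [Finset.mem_Ico] at *; omega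
    · intro a ha; simp only [Finset.mem_Ico] at ha; omega
    · intro a ha; simp only [Finset.mem_Ico] at ha; omega
    · intro a ha
      rfl
  have : 2 * ∑ i ∈ Finset.Ico 1 m, ⌈(i * l : ℚ) / m⌉ =
      ∑ i ∈ Finset.Ico 1 m, (⌈(i * l : ℚ) / m⌉ + ⌈(((m - i : ℕ)) * l : ℚ) / m⌉) := by
    rw [Finset.sum_add_distrib, hrefl]; ring
  rw [this]
  have : ∑ i ∈ Finset.Ico 1 m, (⌈(i * l : ℚ) / m⌉ + ⌈(((m - i : ℕ)) * l : ℚ) / m⌉) =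
      ∑ i ∈ Finset.Ico 1 m, ((l : ℤ) + 1 - (if m ∣ i * l then 1 else 0)) := by
    apply Finset.sum_congr rfl
    intro i hi
    simp only [Finset.mem_Ico] at hi
    exact pair_ceil m l i hm hi.1 hi.2
  rw [this, Finset.sum_sub_distrib, Finset.sum_const, Nat.card_Ico]
  rw [Finset.sum_boole]
  rw [count_dvd m l hm]
  have : ((Nat.gcd m l - 1 : ℕ) : ℤ) = (Nat.gcd m l : ℤ) - 1 := by
    omega
  rw [this, nsmul_eq_mul, Nat.cast_sub (show 1 ≤ m by omega)]
  push_cast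
  ring

theorem stmt_3 (m r : ℕ) (hm : 2 ≤ m) (hr : 1 ≤ r) (lam : Fin r → ℕ)
    (hlam : ∀ ℓ, 1 ≤ lam ℓ ∧ lam ℓ < m)
    (lam0 : ℕ) (hlam0 : lam0 = ∑ ℓ, lam ℓ)
    (hcop : Nat.gcd m lam0 = 1) :
    (((Finset.Ico 1 m).biUnion (fun i =>
        (Finset.Icc (⌈(i * lam0 : ℚ) / m⌉)
            ((∑ ℓ, ⌈(i * lam ℓ : ℚ) / m⌉) - 1)).image
          (fun j => (m : ℤ) * j - i * lam0))).card : ℚ) =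
      (m * (r - 1) + 1 - ∑ ℓ, (Nat.gcd m (lam ℓ) : ℚ)) / 2 := by
  have hm0 : (0:ℚ) < m := by positivity
  set A : ℕ → ℤ := fun i => ∑ ℓ, ⌈(i * lam ℓ : ℚ) / m⌉ with hA
  set B : ℕ → ℤ := fun i => ⌈(i * lam0 : ℚ) / m⌉ with hB
  -- coprimality over ℤ
  have hcopZ : IsCoprime (m : ℤ) (lam0 : ℤ) := by
    rw [Int.isCoprime_iff_gcd_eq_one, Int.gcd_natCast_natCast, hcop]
  -- disjointness
  have hdisj : ∀ x ∈ Finset.Ico 1 m, ∀ y ∈ Finset.Ico 1 m, x ≠ y →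
      Disjoint ((Finset.Icc (B x) (A x - 1)).image (fun j => (m : ℤ) * j - x * lam0))
        ((Finset.Icc (B y) (A y - 1)).image (fun j => (m : ℤ) * j - y * lam0)) := by
    intro x hx y hy hxy
    simp only [Finset.mem_Ico] at hx hy
    rw [Finset.disjoint_left]
    rintro a ha hb
    simp only [Finset.mem_image] at ha hb
    obtain ⟨j, _, hj⟩ := ha
    obtain ⟨j', _, hj'⟩ := hb
    apply hxy
    have hdvd : (m : ℤ) ∣ ((x : ℤ) - y) * lam0 := by
      refine ⟨j - j', ?_⟩
      have := hj.trans hj'.symm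
      ring_nf
      ring_nf at this
      linarith
    have h2 : (m : ℤ) ∣ ((x : ℤ) - y) := hcopZ.dvd_of_dvd_mul_right hdvd
    have h3 : ((x : ℤ) - y) = 0 := by
      apply Int.eq_zero_of_abs_lt_dvd h2
      rw [abs_lt]
      constructor <;> push_cast <;> omega
    omega
  have hset : (Finset.Ico 1 m).biUnion (fun i =>
      (Finset.Icc (⌈(i * lam0 : ℚ) / m⌉) ((∑ ℓ, ⌈(i * lam ℓ : ℚ) / m⌉) - 1)).image
        (fun j => (m : ℤ) * j - i * lam0)) =
      (Finset.Ico 1 m).biUnion (fun i =>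
      (Finset.Icc (B i) (A i - 1)).image (fun j => (m : ℤ) * j - i * lam0)) := rfl
  rw [hset, Finset.card_biUnion hdisj]
  -- per-i cardinality
  have hBA : ∀ i, B i ≤ A i := by
    intro i
    rw [hB, hA]
    apply Int.ceil_le.mpr
    push_cast
    rw [hlam0]
    push_cast
    rw [Finset.mul_sum, Finset.sum_div]
    exact Finset.sum_le_sum (fun ℓ _ => Int.le_ceil _)
  have hcard : ∀ i, (((Finset.Icc (B i) (A i - 1)).image
      (fun j => (m : ℤ) * j - i * lam0)).card : ℤ) = A i - B i := by
    intro i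
    rw [Finset.card_image_of_injective _ (fun a b hab => by
      have h : (m:ℤ) * a = m * b := by linarith
      exact mul_left_cancel₀ (show (m:ℤ) ≠ 0 by exact_mod_cast (by omega : m ≠ 0)) h)]
    rw [Int.card_Icc]
    rw [Int.toNat_of_nonneg (by have := hBA i; omega)]
    omega
  -- total sum
  have hsum : (2 : ℤ) * ∑ i ∈ Finset.Ico 1 m, (((Finset.Icc (B i) (A i - 1)).image
      (fun j => (m : ℤ) * j - i * lam0)).card : ℤ) =
      (m : ℤ) * (r - 1) + 1 - ∑ ℓ, (Nat.gcd m (lam ℓ) : ℤ) := by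
    have e1 : ∑ i ∈ Finset.Ico 1 m, (((Finset.Icc (B i) (A i - 1)).image
        (fun j => (m : ℤ) * j - i * lam0)).card : ℤ) =
        (∑ i ∈ Finset.Ico 1 m, A i) - ∑ i ∈ Finset.Ico 1 m, B i := by
      rw [← Finset.sum_sub_distrib]
      exact Finset.sum_congr rfl (fun i _ => hcard i)
    rw [e1, mul_sub]
    have e2 : (2:ℤ) * ∑ i ∈ Finset.Ico 1 m, B i =
        ((m : ℤ) - 1) * (lam0 + 1) := by
      simp only [hB]
      rw [sum_ceil m lam0 hm, hcop]
      push_cast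
      ring
    have e3 : (2:ℤ) * ∑ i ∈ Finset.Ico 1 m, A i =
        ∑ ℓ, (((m : ℤ) - 1) * (lam ℓ + 1) - Nat.gcd m (lam ℓ) + 1) := by
      simp only [hA]
      rw [Finset.sum_comm, Finset.mul_sum]
      exact Finset.sum_congr rfl (fun ℓ _ => sum_ceil m (lam ℓ) hm)
    rw [e2, e3]
    have e4 : ∑ ℓ, (((m : ℤ) - 1) * (lam ℓ + 1) - Nat.gcd m (lam ℓ) + 1) =
        ((m:ℤ) - 1) * (lam0 + r) - (∑ ℓ, (Nat.gcd m (lam ℓ) : ℤ)) + r := by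
      have hL : (lam0:ℤ) = ∑ ℓ, (lam ℓ : ℤ) := by rw [hlam0]; push_cast; ring
      rw [hL]
      rw [Finset.sum_add_distrib, Finset.sum_sub_distrib, ← Finset.mul_sum,
        Finset.sum_add_distrib, Finset.sum_const, Finset.card_univ, Fintype.card_fin,
        nsmul_eq_mul]
      push_cast
      ring
    rw [e4]
    ring
  -- conclude in ℚ
  have hQ := hsum
  have : ((∑ i ∈ Finset.Ico 1 m, (((Finset.Icc (B i) (A i - 1)).image
      (fun j => (m : ℤ) * j - i * lam0)).card : ℤ) : ℤ) : ℚ) =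
      ((∑ i ∈ Finset.Ico 1 m, ((Finset.Icc (B i) (A i - 1)).image
      (fun j => (m : ℤ) * j - i * lam0)).card : ℕ) : ℚ) := by
    push_cast
    rfl
  have hQ2 : (2 : ℚ) * ((∑ i ∈ Finset.Ico 1 m, ((Finset.Icc (B i) (A i - 1)).image
      (fun j => (m : ℤ) * j - i * lam0)).card : ℕ) : ℚ) =
      (m : ℚ) * ((r:ℚ) - 1) + 1 - ∑ ℓ, (Nat.gcd m (lam ℓ) : ℚ) := by
    rw [← this]
    exact_mod_cast hQ
  linarith [hQ2]
end

section
/- Let m ≥ 2 and r ≥ 2 be integers with gcd(m, r) = 1. Then the cardinality of the set G = { mj − i : 1 ≤ j ≤ r−1, ⌊jm/r⌋ + 1 ≤ i ≤ m−1 } equals (m−1)(r−1)/2. -/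
theorem stmt_4 (m r : ℕ) (hm : 2 ≤ m) (hr : 2 ≤ r) (hcop : Nat.gcd m r = 1) :
    (((Finset.Ico 1 r).biUnion (fun j =>
        (Finset.Icc (⌊(j * m : ℚ) / r⌋ + 1) ((m : ℤ) - 1)).image
          (fun i => (m : ℤ) * j - i))).card : ℚ) =
      (m - 1) * (r - 1) / 2 := by
  set q : ℕ → ℕ := fun j => j * m / r with hq
  -- floor rewriting
  have hfloor : ∀ j : ℕ, ⌊(j * m : ℚ) / r⌋ = (q j : ℤ) := by
    intro j
    rw [hq]
    push_cast
    rw [show ((j:ℚ) * m) = ((j*m : ℕ) : ℚ) by push_cast; ring]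
    exact_mod_cast Rat.floor_natCast_div_natCast (j*m) r
  -- key reflection identity
  have hkey : ∀ j ∈ Finset.Ico 1 r, q j + q (r - j) = m - 1 := by
    intro j hj
    simp only [Finset.mem_Ico] at hj
    have hr0 : 0 < r := by omega
    have hmod : ∀ k, 1 ≤ k → k < r → k * m % r ≠ 0 := by
      intro k hk1 hk2 h
      have hdvd : r ∣ k * m := Nat.dvd_of_mod_eq_zero h
      have hco : Nat.Coprime r m := Nat.Coprime.symm hcop
      have : r ∣ k := Nat.Coprime.dvd_of_dvd_mul_right hco hdvd
      have := Nat.le_of_dvd (by omega) this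
      omega
    have h1 : j * m % r ≠ 0 := hmod j hj.1 hj.2
    have h2 : (r - j) * m % r ≠ 0 := hmod (r - j) (by omega) (by omega)
    have hsum : j * m + (r - j) * m = r * m := by
      have : j + (r - j) = r := by omega
      calc j * m + (r - j) * m = (j + (r-j)) * m := by ring
        _ = r * m := by rw [this]
    have hs : j * m % r + (r - j) * m % r = r := by
      have hd : (j * m % r + (r - j) * m % r) % r = 0 := by
        rw [← Nat.add_mod, hsum, Nat.mul_mod_right]
      have hl1 : j * m % r < r := Nat.mod_lt _ hr0
      have hl2 : (r - j) * m % r < r := Nat.mod_lt _ hr0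
      have hdvd : r ∣ j * m % r + (r - j) * m % r := Nat.dvd_of_mod_eq_zero hd
      exact Nat.eq_of_dvd_of_lt_two_mul (by omega) hdvd (by omega)
    -- now divide
    have e1 := Nat.div_add_mod (j * m) r
    have e2 := Nat.div_add_mod ((r - j) * m) r
    have : r * (j * m / r) + r * ((r - j) * m / r) + r = r * m := by omega
    have : r * (j * m / r + (r - j) * m / r + 1) = r * m := by ring_nf; ring_nf at this; omega
    have := Nat.eq_of_mul_eq_mul_left hr0 this
    simp only [hq]
    omega
  have hqle : ∀ j ∈ Finset.Ico 1 r, q j ≤ m - 1 := by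
    intro j hj; have := hkey j hj; omega
  -- disjointness
  have hdisj : ∀ j₁ ∈ Finset.Ico 1 r, ∀ j₂ ∈ Finset.Ico 1 r, j₁ ≠ j₂ →
      Disjoint ((Finset.Icc (⌊(j₁ * m : ℚ) / r⌋ + 1) ((m : ℤ) - 1)).image
          (fun i => (m : ℤ) * j₁ - i))
        ((Finset.Icc (⌊(j₂ * m : ℚ) / r⌋ + 1) ((m : ℤ) - 1)).image
          (fun i => (m : ℤ) * j₂ - i)) := by
    intro j₁ h₁ j₂ h₂ hne
    rw [Finset.disjoint_left]
    rintro x hx1 hx2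
    simp only [Finset.mem_image, Finset.mem_Icc, hfloor] at hx1 hx2
    obtain ⟨i₁, ⟨hi1a, hi1b⟩, hx1⟩ := hx1
    obtain ⟨i₂, ⟨hi2a, hi2b⟩, hx2⟩ := hx2
    have hq1 : (0:ℤ) ≤ (q j₁ : ℤ) := Int.natCast_nonneg _
    have hq2 : (0:ℤ) ≤ (q j₂ : ℤ) := Int.natCast_nonneg _
    have heq : (m:ℤ) * ((j₂:ℤ) - j₁) = i₂ - i₁ := by
      have : (m:ℤ) * j₁ - i₁ = (m:ℤ) * j₂ - i₂ := by rw [hx1, hx2]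
      linarith
    have hm2 : (2:ℤ) ≤ m := by exact_mod_cast hm
    have hjne : (j₁:ℤ) ≠ j₂ := by exact_mod_cast hne
    rcases lt_or_gt_of_ne hjne with h | h
    · have h1 : (1:ℤ) ≤ (j₂:ℤ) - j₁ := by omega
      have : (m:ℤ) * 1 ≤ (m:ℤ) * ((j₂:ℤ) - j₁) :=
        mul_le_mul_of_nonneg_left h1 (by omega)
      omega
    · have h1' : (1:ℤ) ≤ (j₁:ℤ) - j₂ := by omega
      have h2 : (m:ℤ) * 1 ≤ (m:ℤ) * ((j₁:ℤ) - j₂) :=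
        mul_le_mul_of_nonneg_left h1' (by omega)
      have h3 : (m:ℤ) * ((j₂:ℤ) - j₁) = -((m:ℤ) * ((j₁:ℤ) - j₂)) := by ring
      omega
  rw [Finset.card_biUnion hdisj]
  -- card of each piece
  have hcard : ∀ j ∈ Finset.Ico 1 r,
      ((Finset.Icc (⌊(j * m : ℚ) / r⌋ + 1) ((m : ℤ) - 1)).image
          (fun i => (m : ℤ) * j - i)).card = m - 1 - q j := by
    intro j hj
    rw [Finset.card_image_of_injective _ (fun a b h => by simpa using h),
      hfloor, Int.card_Icc]
    have := hqle j hj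
    omega
  rw [Finset.sum_congr rfl hcard]
  -- sum
  set S := ∑ j ∈ Finset.Ico 1 r, (m - 1 - q j) with hS
  have hrefl : S = ∑ j ∈ Finset.Ico 1 r, (m - 1 - q (r - j)) := by
    rw [hS]
    apply Finset.sum_nbij' (fun j => r - j) (fun j => r - j)
    · intro a ha; simp only [Finset.mem_Ico] at *; omega
    · intro a ha; simp only [Finset.mem_Ico] at *; omega
    · intro a ha; simp only [Finset.mem_Ico] at ha; omega
    · intro a ha; simp only [Finset.mem_Ico] at ha; omega
    · intro a ha; simp only [Finset.mem_Ico] at ha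
      congr 2
      omega
  have h2S : 2 * S = (m - 1) * (r - 1) := by
    have : S + S = ∑ j ∈ Finset.Ico 1 r, ((m - 1 - q j) + (m - 1 - q (r - j))) := by
      nth_rewrite 2 [hrefl]
      rw [hS, ← Finset.sum_add_distrib]
    rw [two_mul, this]
    have : ∀ j ∈ Finset.Ico 1 r, (m - 1 - q j) + (m - 1 - q (r - j)) = m - 1 := by
      intro j hj
      have hk := hkey j hj
      have h1 := hqle j hj
      omega
    rw [Finset.sum_congr rfl this, Finset.sum_const, Nat.card_Ico, smul_eq_mul,
      Nat.mul_comm]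
  -- finish
  have hcast : (S : ℚ) = ((m:ℚ) - 1) * ((r:ℚ) - 1) / 2 := by
    have : (2 * S : ℚ) = ((m - 1) * (r - 1) : ℕ) := by exact_mod_cast congrArg (Nat.cast (R := ℚ)) h2S
    push_cast [Nat.cast_sub (by omega : 1 ≤ m), Nat.cast_sub (by omega : 1 ≤ r)] at this
    linarith
  exact hcast
end

section
/- Let P₁, P₂ be two distinct rational places of a function field and suppose the Weierstrass gap sets G(P₁) = {β₁ < ⋯ < β_g} and G(P₂) = {γ₁ < ⋯ < γ_g} each have g elements, with a permutation σ of {1,…,g} such that Γ(P₁,P₂) = {(β_i, γ_{σ(i)}) : i = 1,…,g} and the pure gap set is G₀(P₁,P₂) = {(β_i, γ_j) : i < σ⁻¹(j) and j < σ(i)}. Then G₀(P₁,P₂) = { glb(x, y) : x, y ∈ Γ(P₁,P₂) } \ Γ(P₁,P₂), where glb((a,b),(c,d)) = (min{a,c}, min{b,d}). -/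
theorem stmt_7 (g : ℕ) (β γ : Fin g → ℕ) (hβ : StrictMono β) (hγ : StrictMono γ)
    (σ : Equiv.Perm (Fin g)) :
    {p : ℕ × ℕ | ∃ i j : Fin g, i < σ.symm j ∧ j < σ i ∧ p = (β i, γ j)} =
      {p : ℕ × ℕ | ∃ x ∈ {p : ℕ × ℕ | ∃ i : Fin g, p = (β i, γ (σ i))},
          ∃ y ∈ {p : ℕ × ℕ | ∃ i : Fin g, p = (β i, γ (σ i))},
          p = (min x.1 y.1, min x.2 y.2)} \
        {p : ℕ × ℕ | ∃ i : Fin g, p = (β i, γ (σ i))} := by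
  ext p
  simp only [Set.mem_setOf_eq, Set.mem_diff]
  constructor
  · rintro ⟨i, j, h1, h2, rfl⟩
    refine ⟨⟨(β i, γ (σ i)), ⟨i, rfl⟩, (β (σ.symm j), γ j), ⟨σ.symm j, by simp⟩, ?_⟩, ?_⟩
    · simp only
      rw [min_eq_left (hβ h1).le, min_eq_right (hγ h2).le]
    · rintro ⟨k, hk⟩
      have hik : i = k := hβ.injective (by simpa using congrArg Prod.fst hk)
      have hj : γ j = γ (σ k) := by simpa using congrArg Prod.snd hk
      have := hγ.injective hj
      subst hik
      exact absurd this (by subst this; exact absurd h2 (lt_irrefl _))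
  · rintro ⟨⟨x, ⟨i, rfl⟩, y, ⟨k, rfl⟩, rfl⟩, hn⟩
    simp only at *
    rcases lt_trichotomy i k with hik | rfl | hik
    · rcases lt_trichotomy (σ i) (σ k) with hs | hs | hs
      · exact absurd ⟨i, by rw [min_eq_left (hβ hik).le, min_eq_left (hγ hs).le]⟩ hn
      · exact absurd (σ.injective hs) hik.ne
      · refine ⟨i, σ k, by simpa using hik, hs, ?_⟩
        rw [min_eq_left (hβ hik).le, min_eq_right (hγ hs).le]
    · exact absurd ⟨i, by simp⟩ hn
    · rcases lt_trichotomy (σ k) (σ i) with hs | hs | hs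
      · exact absurd ⟨k, by rw [min_eq_right (hβ hik).le, min_eq_right (hγ hs).le]⟩ hn
      · exact absurd (σ.injective hs) hik.ne
      · refine ⟨k, σ i, by simpa using hik, hs, ?_⟩
        rw [min_eq_right (hβ hik).le, min_eq_left (hγ hs).le]
end

section
/- Let q ≥ 2 and n ≥ 3 with n odd, M = (qⁿ − 2q^{n−1} + 1)/(q − 1). For integers a, b with 1 ≤ a ≤ q+1 and 0 ≤ b ≤ ⌈(qⁿ+1−2a)/(q²−q)⌉ − 1, setting i = aM + b, one has ⌈i(q²−q)/(qⁿ+1)⌉ = a(q−2) + 1. -/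
theorem stmt_11 (q n : ℕ) (hq : 2 ≤ q) (hn : 3 ≤ n) (hno : Odd n)
    (M a b i : ℤ)
    (hM : ((q : ℤ) - 1) * M = (q : ℤ) ^ n - 2 * (q : ℤ) ^ (n - 1) + 1)
    (ha1 : 1 ≤ a) (ha2 : a ≤ (q : ℤ) + 1)
    (hb1 : 0 ≤ b)
    (hb2 : b ≤ ⌈((q : ℚ) ^ n + 1 - 2 * (a : ℚ)) / ((q : ℚ) ^ 2 - q)⌉ - 1)
    (hi : i = a * M + b) :
    ⌈((i : ℚ) * ((q : ℚ) ^ 2 - q)) / ((q : ℚ) ^ n + 1)⌉ = a * ((q : ℤ) - 2) + 1 := by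
  have hq2 : (2 : ℚ) ≤ (q : ℚ) := by exact_mod_cast hq
  have hN : (0 : ℚ) < (q : ℚ) ^ n + 1 := by positivity
  have hD : (0 : ℚ) < (q : ℚ) ^ 2 - q := by nlinarith
  have hMQ : ((q : ℚ) - 1) * (M : ℚ) = (q : ℚ) ^ n - 2 * (q : ℚ) ^ (n - 1) + 1 := by
    exact_mod_cast hM
  have hpow : (q : ℚ) ^ (n - 1) * q = (q : ℚ) ^ n := by
    rw [← pow_succ]; congr 1; omega
  have hiQ : (i : ℚ) = (a : ℚ) * (M : ℚ) + (b : ℚ) := by exact_mod_cast hi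
  have hkey : (i : ℚ) * ((q : ℚ) ^ 2 - q)
      = (a : ℚ) * ((q : ℚ) ^ n * q - 2 * (q : ℚ) ^ n + q) + (b : ℚ) * ((q : ℚ) ^ 2 - q) := by
    rw [hiQ]
    linear_combination (a : ℚ) * (q : ℚ) * hMQ - 2 * (a : ℚ) * hpow
  set x : ℚ := ((q : ℚ) ^ n + 1 - 2 * (a : ℚ)) / ((q : ℚ) ^ 2 - q) with hx
  have hbx : (b : ℚ) < x := by
    have h1 : (b : ℚ) ≤ (⌈x⌉ : ℚ) - 1 := by
      have : (b : ℤ) ≤ ⌈x⌉ - 1 := hb2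
      push_cast
      exact_mod_cast this
    have h2 : (⌈x⌉ : ℚ) < x + 1 := Int.ceil_lt_add_one x
    linarith
  have hbD : (b : ℚ) * ((q : ℚ) ^ 2 - q) < (q : ℚ) ^ n + 1 - 2 * (a : ℚ) :=
    (lt_div_iff₀ hD).mp hbx
  have ha1' : (1 : ℚ) ≤ (a : ℚ) := by exact_mod_cast ha1
  have hb1' : (0 : ℚ) ≤ (b : ℚ) := by exact_mod_cast hb1
  rw [Int.ceil_eq_iff]
  constructor
  · rw [lt_div_iff₀ hN, hkey]
    push_cast
    nlinarith [mul_nonneg hb1' hD.le]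
  · rw [div_le_iff₀ hN, hkey]
    push_cast
    nlinarith
end

section
/- Let q ≥ 4 and n ≥ 3. If 1 ≤ a ≤ q/2 then ⌈(qⁿ+1−2a)/(q²−q)⌉ − 1 ≥ 2a(q^{n−1}−1)/(q²−1); and if q/2 + 1 ≤ a ≤ q+1 then 2a(q^{n−1}−1)/(q²−1) ≥ ⌈(qⁿ+1−2a)/(q²−q)⌉ − 1 = (q^{n−1}−q)/(q−1). -/
theorem stmt_12 (q n : ℕ) (hq : 4 ≤ q) (hqe : Even q) (hn : 3 ≤ n) (hno : Odd n)
    (a : ℤ) :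
    ((1 ≤ a → 2 * a ≤ (q : ℤ) →
        2 * (a : ℚ) * ((q : ℚ) ^ (n - 1) - 1) / ((q : ℚ) ^ 2 - 1) ≤
          ((⌈((q : ℚ) ^ n + 1 - 2 * (a : ℚ)) / ((q : ℚ) ^ 2 - q)⌉ - 1 : ℤ) : ℚ)) ∧
      ((q : ℤ) + 2 ≤ 2 * a → a ≤ (q : ℤ) + 1 →
        ((⌈((q : ℚ) ^ n + 1 - 2 * (a : ℚ)) / ((q : ℚ) ^ 2 - q)⌉ - 1 : ℤ) : ℚ) ≤
            2 * (a : ℚ) * ((q : ℚ) ^ (n - 1) - 1) / ((q : ℚ) ^ 2 - 1) ∧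
          ((⌈((q : ℚ) ^ n + 1 - 2 * (a : ℚ)) / ((q : ℚ) ^ 2 - q)⌉ - 1 : ℤ) : ℚ) =
            ((q : ℚ) ^ (n - 1) - q) / ((q : ℚ) - 1))) := by
  have hQ4 : (4:ℚ) ≤ (q:ℚ) := by exact_mod_cast hq
  have hm : n - 1 + 1 = n := by omega
  have hpow : (q:ℚ) ^ n = (q:ℚ) * (q:ℚ) ^ (n-1) := by
    conv_lhs => rw [← hm]
    rw [pow_succ]; ring
  have hP2 : (q:ℚ)^2 ≤ (q:ℚ)^(n-1) := pow_le_pow_right₀ (by linarith) (by omega)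
  have hQ2 : (16:ℚ) ≤ (q:ℚ)^2 := by nlinarith
  obtain ⟨t, ht⟩ : ((q:ℤ) - 1) ∣ ((q:ℤ)^(n-1) - q) := by
    have h1 : ((q:ℤ) - 1) ∣ ((q:ℤ)^(n-2) - 1) := by
      have := sub_dvd_pow_sub_pow (q:ℤ) 1 (n-2)
      simpa using this
    have h2 : (q:ℤ)^(n-1) - q = q * ((q:ℤ)^(n-2) - 1) := by
      have h3 : n - 2 + 1 = n - 1 := by omega
      rw [← h3, pow_succ]; ring
    rw [h2]; exact Dvd.dvd.mul_left h1 q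
  have htQ : (q:ℚ)^(n-1) - q = ((q:ℚ) - 1) * (t:ℚ) := by exact_mod_cast ht
  set x : ℚ := ((q:ℚ) ^ n + 1 - 2 * (a : ℚ)) / ((q:ℚ) ^ 2 - q) with hx
  have hden : (0:ℚ) < (q:ℚ)^2 - q := by nlinarith
  have hden1 : (0:ℚ) < (q:ℚ)^2 - 1 := by nlinarith
  constructor
  · intro h1 h2
    have ha1 : (1:ℚ) ≤ (a:ℚ) := by exact_mod_cast h1
    have ha2 : 2 * (a:ℚ) ≤ q := by exact_mod_cast h2
    have hlt : (t + 1 : ℤ) < ⌈x⌉ := by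
      rw [Int.lt_ceil, hx, lt_div_iff₀ hden]
      push_cast
      nlinarith [htQ, hpow]
    have h4 : ((t:ℚ) + 1) ≤ ((⌈x⌉ - 1 : ℤ) : ℚ) := by
      have : (t + 2 : ℤ) ≤ ⌈x⌉ := by omega
      push_cast
      have : ((t:ℚ) + 2) ≤ (⌈x⌉ : ℚ) := by exact_mod_cast this
      linarith
    refine le_trans ?_ h4
    rw [div_le_iff₀ hden1]
    nlinarith [htQ, hP2]
  · intro h1 h2
    have ha1 : (q:ℚ) + 2 ≤ 2 * (a:ℚ) := by exact_mod_cast h1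
    have ha2 : (a:ℚ) ≤ (q:ℚ) + 1 := by exact_mod_cast h2
    have hceil : ⌈x⌉ = t + 1 := by
      rw [Int.ceil_eq_iff]
      constructor
      · push_cast
        rw [hx, lt_div_iff₀ hden]
        nlinarith [htQ, hpow]
      · push_cast
        rw [hx, div_le_iff₀ hden]
        nlinarith [htQ, hpow]
    rw [hceil]
    have hsimp : ((t + 1 - 1 : ℤ) : ℚ) = (t:ℚ) := by push_cast; ring
    rw [hsimp]
    constructor
    · rw [le_div_iff₀ hden1]
      nlinarith [htQ, hP2, ha1]
    · rw [eq_div_iff (by linarith : (q:ℚ) - 1 ≠ 0)]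
      linarith [htQ]
end

section
/- Let m = qⁿ + 1 with q ≥ 4 even and n ≥ 3 odd, s = (qⁿ+1)/(q+1), and define Γ∞ = {(mj₁ − i(q²−q), i + mj₂) : 1 ≤ i ≤ m−1, j₁ ≥ ⌈i(q²−q)/m⌉, j₂ ≥ 0, j₁ + j₂ = (q−2)⌈i/s⌉ + 1}. Then for every a with 0 ≤ a ≤ s−1, the pair ((qⁿ+1)(q−1) − (s−a)(q²−q), s−a) belongs to Γ∞. -/
theorem stmt_14 (q n : ℕ) (hq : 4 ≤ q) (hqe : Even q) (hn : 3 ≤ n) (hno : Odd n)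
    (s : ℤ) (hs : ((q : ℤ) + 1) * s = (q : ℤ) ^ n + 1)
    (a : ℤ) (ha1 : 0 ≤ a) (ha2 : a ≤ s - 1) :
    ((((q : ℤ) ^ n + 1) * ((q : ℤ) - 1) - (s - a) * ((q : ℤ) ^ 2 - q), s - a) ∈
      {p : ℤ × ℤ | ∃ i j₁ j₂ : ℤ, 1 ≤ i ∧ i ≤ (q : ℤ) ^ n + 1 - 1 ∧
        ⌈((i : ℚ) * ((q : ℚ) ^ 2 - q)) / ((q : ℚ) ^ n + 1)⌉ ≤ j₁ ∧ 0 ≤ j₂ ∧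
        j₁ + j₂ = ((q : ℤ) - 2) * ⌈(i : ℚ) / (s : ℚ)⌉ + 1 ∧
        p = (((q : ℤ) ^ n + 1) * j₁ - i * ((q : ℤ) ^ 2 - q),
              i + ((q : ℤ) ^ n + 1) * j₂)}) := by
  have hq4 : (4 : ℤ) ≤ (q : ℤ) := by exact_mod_cast hq
  have hqn1 : (1 : ℤ) ≤ (q : ℤ) ^ n := by { have := pow_pos (show (0:ℤ) < (q:ℤ) by linarith) n; linarith }
  have hs0 : 0 < s := by nlinarith
  have hsle : s ≤ (q : ℤ) ^ n := by nlinarith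
  refine ⟨s - a, (q : ℤ) - 1, 0, by linarith, by linarith, ?_, le_refl 0, ?_, ?_⟩
  · rw [Int.ceil_le]
    have hpos : (0 : ℚ) < (q : ℚ) ^ n + 1 := by positivity
    rw [div_le_iff₀ hpos]
    have key : (s - a) * ((q : ℤ) ^ 2 - q) ≤ ((q : ℤ) - 1) * ((q : ℤ) ^ n + 1) := by
      nlinarith [mul_nonneg ha1 (show (0:ℤ) ≤ (q:ℤ)^2 - q by nlinarith),
        mul_pos hs0 (show (0:ℤ) < (q:ℤ) - 1 by linarith)]
    push_cast
    exact_mod_cast key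
  · have hsq : (0 : ℚ) < (s : ℚ) := by exact_mod_cast hs0
    have haq : (a : ℚ) ≤ (s : ℚ) - 1 := by exact_mod_cast ha2
    have ha0q : (0 : ℚ) ≤ (a : ℚ) := by exact_mod_cast ha1
    have hceil : ⌈((s - a : ℤ) : ℚ) / (s : ℚ)⌉ = 1 := by
      rw [Int.ceil_eq_iff]
      push_cast
      constructor
      · have : (0:ℚ) < ((s:ℚ) - a) / s := div_pos (by linarith) hsq
        linarith
      · rw [div_le_one hsq]; linarith
    rw [hceil]
    ring
  · simp
end

section
/- Let q ≥ 4 be even and n ≥ 3 odd, s = (qⁿ+1)/(q+1), g = ((qⁿ+1)(q−1) − q² + q + 1)/2 (an integer). For a = ⌊(q^{n+2} − 2q^{n+1} − q³ + q² + 1)/(2q³ − 3q − 1)⌋ + 1, the degree 2(q^{n+1} − qⁿ + q − 2) − (s − a)(2q² − 2q − 1) is strictly greater than 2g − 2 = (q^{n+2} − qⁿ − q³ + q² − 2)/(q+1). -/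
theorem stmt_18 (q n : ℕ) (hq : 4 ≤ q) (hqe : Even q) (hn : 3 ≤ n) (hno : Odd n)
    (s g a : ℤ)
    (hs : ((q : ℤ) + 1) * s = (q : ℤ) ^ n + 1)
    (hg : 2 * g = ((q : ℤ) ^ n + 1) * ((q : ℤ) - 1) - (q : ℤ) ^ 2 + q + 1)
    (ha : a = ⌊((q : ℚ) ^ (n + 2) - 2 * (q : ℚ) ^ (n + 1) - (q : ℚ) ^ 3 + (q : ℚ) ^ 2 + 1) /
        (2 * (q : ℚ) ^ 3 - 3 * (q : ℚ) - 1)⌋ + 1) :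
    2 * g - 2 <
        2 * ((q : ℤ) ^ (n + 1) - (q : ℤ) ^ n + q - 2) - (s - a) * (2 * (q : ℤ) ^ 2 - 2 * q - 1) ∧
      ((2 * g - 2 : ℤ) : ℚ) =
        ((q : ℚ) ^ (n + 2) - (q : ℚ) ^ n - (q : ℚ) ^ 3 + (q : ℚ) ^ 2 - 2) / ((q : ℚ) + 1) := by
  have hqQ : (4 : ℚ) ≤ (q : ℚ) := by exact_mod_cast hq
  have hD : (0 : ℚ) < 2 * (q : ℚ) ^ 3 - 3 * (q : ℚ) - 1 := by nlinarith
  have hfl : ((q : ℚ) ^ (n + 2) - 2 * (q : ℚ) ^ (n + 1) - (q : ℚ) ^ 3 + (q : ℚ) ^ 2 + 1) /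
      (2 * (q : ℚ) ^ 3 - 3 * (q : ℚ) - 1) < (a : ℚ) := by
    rw [ha]; push_cast; exact Int.lt_floor_add_one _
  have hND : (q : ℚ) ^ (n + 2) - 2 * (q : ℚ) ^ (n + 1) - (q : ℚ) ^ 3 + (q : ℚ) ^ 2 + 1 <
      (a : ℚ) * (2 * (q : ℚ) ^ 3 - 3 * (q : ℚ) - 1) := (div_lt_iff₀ hD).mp hfl
  have hZ : (q : ℤ) ^ (n + 2) - 2 * (q : ℤ) ^ (n + 1) - (q : ℤ) ^ 3 + (q : ℤ) ^ 2 + 1 <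
      a * (2 * (q : ℤ) ^ 3 - 3 * (q : ℤ) - 1) := by exact_mod_cast hND
  have hq1 : (0 : ℤ) < (q : ℤ) + 1 := by positivity
  constructor
  · have key : ((q : ℤ) + 1) *
        (2 * ((q : ℤ) ^ (n + 1) - (q : ℤ) ^ n + q - 2) - (s - a) * (2 * (q : ℤ) ^ 2 - 2 * q - 1))
        - ((q : ℤ) + 1) * (2 * g - 2) =
        a * (2 * (q : ℤ) ^ 3 - 3 * (q : ℤ) - 1)
        - ((q : ℤ) ^ (n + 2) - 2 * (q : ℤ) ^ (n + 1) - (q : ℤ) ^ 3 + (q : ℤ) ^ 2 + 1) := by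
      linear_combination (-(2 * (q : ℤ) ^ 2 - 2 * q - 1)) * hs - ((q : ℤ) + 1) * hg
    have h2 : ((q : ℤ) + 1) * (2 * g - 2) < ((q : ℤ) + 1) *
        (2 * ((q : ℤ) ^ (n + 1) - (q : ℤ) ^ n + q - 2) - (s - a) * (2 * (q : ℤ) ^ 2 - 2 * q - 1)) := by
      linarith [key, hZ]
    exact lt_of_mul_lt_mul_left h2 hq1.le
  · have hq1Q : ((q : ℚ) + 1) ≠ 0 := by positivity
    have hgQ : (2 : ℚ) * (g : ℚ) = ((q : ℚ) ^ n + 1) * ((q : ℚ) - 1) - (q : ℚ) ^ 2 + q + 1 := by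
      exact_mod_cast congrArg (Int.cast : ℤ → ℚ) hg
    rw [eq_div_iff hq1Q]
    push_cast
    linear_combination ((q : ℚ) + 1) * hgQ
end
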